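/- Let G be a finite multigraph on a vertically ordered vertex set in which every vertex v satisfies ldeg_G(v) ∈ {0, 2} and hdeg_G(v) ∈ {0, 2}, and suppose G is partitioned into alternating cycles, splitting into up-edge graph G_1 and down-edge graph G_2. Then every connected component of G_1 (and of G_2) is either a single vertex or a path v_{i_1} < v_{i_2} < ... < v_{i_m} along vertices of strictly increasing height. -/

import Mathlib

/-! Common definitions: vertical (multi)graphs on `Fin n` (vertices ordered by height,
vertex `v` at height `(v : ℕ)`), edges stored as pairs `(lower, upper)`. -/

/-- Number of edges of `E` from `v` to strictly lower vertices
(i.e. edges whose upper endpoint is `v`), with multiplicity. -/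
def ldeg {n : ℕ} (E : Multiset (Fin n × Fin n)) (v : Fin n) : ℕ :=
  (E.filter (fun e => e.2 = v)).card

/-- Number of edges of `E` from `v` to strictly higher vertices
(i.e. edges whose lower endpoint is `v`), with multiplicity. -/
def hdeg {n : ℕ} (E : Multiset (Fin n × Fin n)) (v : Fin n) : ℕ :=
  (E.filter (fun e => e.1 = v)).card

/-- An alternating cycle: a closed walk `w 0, w 1, …, w (2m) = w 0` whose edges
alternately go up and down (odd-indexed vertices are above both cyclic neighbours). -/
structure AltCycle (n : ℕ) where
  m : ℕ
  pos : 0 < m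
  w : ℕ → Fin n
  closed : w (2 * m) = w 0
  up : ∀ j < m, w (2 * j) < w (2 * j + 1)
  down : ∀ j < m, w (2 * j + 2) < w (2 * j + 1)

/-- The up-edges of an alternating cycle (as `(lower, upper)` pairs). -/
def AltCycle.upEdges {n : ℕ} (C : AltCycle n) : Multiset (Fin n × Fin n) :=
  (Multiset.range C.m).map (fun j => (C.w (2 * j), C.w (2 * j + 1)))

/-- The down-edges of an alternating cycle (as `(lower, upper)` pairs). -/
def AltCycle.downEdges {n : ℕ} (C : AltCycle n) : Multiset (Fin n × Fin n) :=
  (Multiset.range C.m).map (fun j => (C.w (2 * j + 2), C.w (2 * j + 1)))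

/-- All edges of an alternating cycle. -/
def AltCycle.edges {n : ℕ} (C : AltCycle n) : Multiset (Fin n × Fin n) :=
  C.upEdges + C.downEdges

/-- The edge multiset `E` can be partitioned into alternating cycles. -/
def AltPartition {n : ℕ} (E : Multiset (Fin n × Fin n)) : Prop :=
  ∃ (k : ℕ) (Cs : Fin k → AltCycle n), E = ∑ i, (Cs i).edges

/-- The undirected edge between `a` and `b`, stored as a `(lower, upper)` pair. -/
def stepEdge {n : ℕ} (a b : Fin n) : Fin n × Fin n := if a < b then (a, b) else (b, a)

/-- `E` contains a (vertex-simple) cycle: a closed walk with pairwise distinct vertices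
whose (undirected) edge multiset is contained in `E`. -/
def HasCycle {n : ℕ} (E : Multiset (Fin n × Fin n)) : Prop :=
  ∃ (len : ℕ) (w : ℕ → Fin n), 0 < len ∧ w len = w 0 ∧
    (∀ i < len, ∀ j < len, w i = w j → i = j) ∧
    ((Multiset.range len).map (fun j => stepEdge (w j) (w (j + 1)))) ≤ E

/-- Reachability (connectivity) in the multigraph with edge multiset `E`. -/
def Reach {n : ℕ} (E : Multiset (Fin n × Fin n)) (a b : Fin n) : Prop :=
  Relation.ReflTransGen (fun x y => (x, y) ∈ E ∨ (y, x) ∈ E) a b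

/-- The connected component of `v` in `E` is a single vertex or a path along
vertices of strictly increasing height. -/
def IncPathComp {n : ℕ} (E : Multiset (Fin n × Fin n)) (v : Fin n) : Prop :=
  ∃ (m : ℕ) (p : Fin (m + 1) → Fin n), StrictMono p ∧
    (∀ u, Reach E v u ↔ ∃ i, p i = u) ∧
    (∀ i : Fin m, (p i.castSucc, p i.succ) ∈ E)

/-- The edges present at stage `j` of the upward lower-star filtration:
those whose upper endpoint has height at most `j`. -/
def levelEdges {n : ℕ} (E : Multiset (Fin n × Fin n)) (j : ℕ) : Multiset (Fin n × Fin n) :=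
  E.filter (fun e => (e.2 : ℕ) ≤ j)

/-- Death time (elder rule) of the 0-dimensional class created by vertex `v` in the
upward lower-star filtration: the first height at which `v` gets connected to a
strictly lower (older) vertex, or `∞` if this never happens. -/
noncomputable def death0 {n : ℕ} (E : Multiset (Fin n × Fin n)) (v : Fin n) : ℕ∞ :=
  sInf ((fun j : ℕ => (j : ℕ∞)) '' {j : ℕ | ∃ u, u < v ∧ Reach (levelEdges E j) u v})

/-- The 0-dimensional verbose persistence diagram in the up direction: one point
per vertex, born at the height of the vertex. -/
noncomputable def diag0 {n : ℕ} (E : Multiset (Fin n × Fin n)) : Multiset (ℕ × ℕ∞) :=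
  (Finset.univ.val : Multiset (Fin n)).map (fun v : Fin n => ((v : ℕ), death0 E v))

/-- Number of edges entering at height `j` (upper endpoint of height `j`). -/
def edgesAt {n : ℕ} (E : Multiset (Fin n × Fin n)) (j : ℕ) : ℕ :=
  (E.filter (fun e => (e.2 : ℕ) = j)).card

/-- Number of 0-dimensional points dying at height `j` in the verbose diagram. -/
noncomputable def deaths0At {n : ℕ} (E : Multiset (Fin n × Fin n)) (j : ℕ) : ℕ :=
  Nat.card {v : Fin n // death0 E v = (j : ℕ∞)}

/-- Number of 1-dimensional classes born at height `j`: edges entering at height `j`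
that are creators rather than destructors. -/
noncomputable def cyclesBornAt {n : ℕ} (E : Multiset (Fin n × Fin n)) (j : ℕ) : ℕ :=
  edgesAt E j - deaths0At E j

/-- The graph with the vertical order reversed (for the down direction). -/
def flipE {n : ℕ} (E : Multiset (Fin n × Fin n)) : Multiset (Fin n × Fin n) :=
  E.map (fun e => (e.2.rev, e.1.rev))

/-- Equality of the verbose persistence diagrams in the up direction. -/
def UpDiagEq {n : ℕ} (E1 E2 : Multiset (Fin n × Fin n)) : Prop :=
  diag0 E1 = diag0 E2 ∧ ∀ j, cyclesBornAt E1 j = cyclesBornAt E2 j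

/-- Equality of VPHTs for vertical graphs: the verbose diagrams agree in both the
up and the down direction. -/
def VPHTEq {n : ℕ} (E1 E2 : Multiset (Fin n × Fin n)) : Prop :=
  UpDiagEq E1 E2 ∧ UpDiagEq (flipE E1) (flipE E2)

/-- Number of connected components of the multigraph with edge multiset `E`. -/
noncomputable def numComponents {n : ℕ} (E : Multiset (Fin n × Fin n)) : ℕ :=
  Nat.card (Quot (Reach E))

/-- The edge multiset `E` can be partitioned into cycles (closed trails). -/
def CircuitPartition {n : ℕ} (E : Multiset (Fin n × Fin n)) : Prop :=
  ∃ (k : ℕ) (len : Fin k → ℕ) (w : Fin k → ℕ → Fin n),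
    (∀ i, 0 < len i) ∧ (∀ i, w i (len i) = w i 0) ∧
    (∀ i, ∀ j < len i, w i j ≠ w i (j + 1)) ∧
    (∑ i, (Multiset.range (len i)).map (fun j => stepEdge (w i j) (w i (j + 1)))) = E
section Core
variable {n : ℕ}

lemma two_mem_card {α : Type*} {s : Multiset α} {a b : α} (ha : a ∈ s) (hb : b ∈ s)
    (hab : a ≠ b) : 2 ≤ Multiset.card s := by
  classical
  obtain ⟨t, rfl⟩ := Multiset.exists_cons_of_mem ha
  have hbt : b ∈ t := by
    rcases Multiset.mem_cons.mp hb with rfl | h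
    · exact absurd rfl hab
    · exact h
  have : 0 < Multiset.card t := Multiset.card_pos_iff_exists_mem.mpr ⟨b, hbt⟩
  simp only [Multiset.card_cons]
  omega

def UpG (E : Multiset (Fin n × Fin n)) : Prop := ∀ e ∈ E, e.1 < e.2
def LdOne (E : Multiset (Fin n × Fin n)) : Prop :=
  ∀ v : Fin n, Multiset.card (E.filter fun e => e.2 = v) ≤ 1
def HdOne (E : Multiset (Fin n × Fin n)) : Prop :=
  ∀ v : Fin n, Multiset.card (E.filter fun e => e.1 = v) ≤ 1

variable {E : Multiset (Fin n × Fin n)}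

lemma up_wf (hup : UpG E) {v u : Fin n} (h : (v, u) ∈ E) : n - (u : ℕ) < n - (v : ℕ) := by
  have h1 := hup _ h
  simp only [Fin.lt_def] at h1
  have h2 := u.isLt
  omega

lemma down_wf (hup : UpG E) {v u : Fin n} (h : (u, v) ∈ E) : (u : ℕ) < (v : ℕ) := by
  have h1 := hup _ h
  simpa only [Fin.lt_def] using h1

lemma uniq_out (hhd : HdOne E) {v a b : Fin n} (ha : (v, a) ∈ E) (hb : (v, b) ∈ E) : a = b := by
  by_contra hne
  have ha' : (v, a) ∈ E.filter (fun e => e.1 = v) := Multiset.mem_filter.mpr ⟨ha, rfl⟩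
  have hb' : (v, b) ∈ E.filter (fun e => e.1 = v) := Multiset.mem_filter.mpr ⟨hb, rfl⟩
  have := two_mem_card ha' hb' (by simp [hne])
  have := hhd v
  omega

lemma uniq_in (hld : LdOne E) {v a b : Fin n} (ha : (a, v) ∈ E) (hb : (b, v) ∈ E) : a = b := by
  by_contra hne
  have ha' : (a, v) ∈ E.filter (fun e => e.2 = v) := Multiset.mem_filter.mpr ⟨ha, rfl⟩
  have hb' : (b, v) ∈ E.filter (fun e => e.2 = v) := Multiset.mem_filter.mpr ⟨hb, rfl⟩
  have := two_mem_card ha' hb' (by simp [hne])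
  have := hld v
  omega

noncomputable def upList (E : Multiset (Fin n × Fin n)) (hup : UpG E) (v : Fin n) :
    List (Fin n) :=
  if h : ∃ u, (v, u) ∈ E then v :: upList E hup (Classical.choose h) else [v]
termination_by n - (v : ℕ)
decreasing_by exact up_wf hup (Classical.choose_spec h)

noncomputable def bot (E : Multiset (Fin n × Fin n)) (hup : UpG E) (v : Fin n) : Fin n :=
  if h : ∃ u, (u, v) ∈ E then bot E hup (Classical.choose h) else v
termination_by (v : ℕ)
decreasing_by exact down_wf hup (Classical.choose_spec h)

lemma upList_ne_nil (hup : UpG E) (v : Fin n) : upList E hup v ≠ [] := by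
  rw [upList]; split <;> simp

lemma upList_head? (hup : UpG E) (v : Fin n) : (upList E hup v).head? = some v := by
  rw [upList]; split <;> rfl

lemma mem_upList_self (hup : UpG E) (v : Fin n) : v ∈ upList E hup v := by
  rw [upList]; split <;> simp

lemma upList_chain (hup : UpG E) (v : Fin n) :
    List.Chain' (fun a b => (a, b) ∈ E) (upList E hup v) := by
  rw [upList]
  split
  · next h =>
    show List.IsChain _ _
    rw [List.isChain_cons]
    refine ⟨?_, upList_chain hup (Classical.choose h)⟩
    intro y hy
    rw [upList_head? hup] at hy
    simp only [Option.mem_some_iff] at hy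
    subst hy
    exact Classical.choose_spec h
  · exact List.isChain_singleton v
termination_by n - (v : ℕ)
decreasing_by rename_i h; exact up_wf hup (Classical.choose_spec h)

lemma reach_of_mem_upList (hup : UpG E) {v u : Fin n} (hu : u ∈ upList E hup v) :
    Reach E v u := by
  rw [upList] at hu
  split at hu
  · next h =>
    rcases List.mem_cons.mp hu with rfl | hu
    · exact Relation.ReflTransGen.refl
    · have : Reach E (Classical.choose h) u := reach_of_mem_upList hup hu
      exact Relation.ReflTransGen.head (Or.inl (Classical.choose_spec h)) this
  · simp only [List.mem_singleton] at hu; subst hu; exact Relation.ReflTransGen.refl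
termination_by n - (v : ℕ)
decreasing_by rename_i h; exact up_wf hup (Classical.choose_spec h)

lemma mem_upList_next (hup : UpG E) (hhd : HdOne E) {w x y : Fin n}
    (hx : x ∈ upList E hup w) (hxy : (x, y) ∈ E) : y ∈ upList E hup w := by
  rw [upList] at hx ⊢
  split at hx
  · next h =>
    rcases List.mem_cons.mp hx with rfl | hx
    · have hy : y = Classical.choose h := uniq_out hhd hxy (Classical.choose_spec h)
      subst hy
      simp only [dif_pos h, List.mem_cons]
      exact Or.inr (mem_upList_self hup _)
    · simp only [dif_pos h, List.mem_cons]
      exact Or.inr (mem_upList_next hup hhd hx hxy)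
  · next h =>
    simp only [List.mem_singleton] at hx; subst hx
    exact absurd ⟨y, hxy⟩ h
termination_by n - (w : ℕ)
decreasing_by rename_i h; exact up_wf hup (Classical.choose_spec h)

lemma mem_upList_prev (hup : UpG E) (hld : LdOne E) {w x y : Fin n}
    (hx : x ∈ upList E hup w) (hyx : (y, x) ∈ E) : x = w ∨ y ∈ upList E hup w := by
  rw [upList] at hx
  split at hx
  · next h =>
    rcases List.mem_cons.mp hx with rfl | hx
    · exact Or.inl rfl
    · rcases mem_upList_prev hup hld hx hyx with rfl | hy
      · right
        have hw : y = w := uniq_in hld hyx (Classical.choose_spec h)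
        subst hw
        exact mem_upList_self hup y
      · right
        rw [upList]
        simp only [dif_pos h, List.mem_cons]
        exact Or.inr hy
  · simp only [List.mem_singleton] at hx; subst hx; exact Or.inl rfl
termination_by n - (w : ℕ)
decreasing_by rename_i h; exact up_wf hup (Classical.choose_spec h)

lemma bot_no_prev (hup : UpG E) (v : Fin n) : ¬ ∃ u, (u, bot E hup v) ∈ E := by
  rw [bot]
  split
  · next h => exact bot_no_prev hup (Classical.choose h)
  · next h => exact h
termination_by (v : ℕ)
decreasing_by rename_i h; exact down_wf hup (Classical.choose_spec h)

lemma mem_upList_bot (hup : UpG E) (hhd : HdOne E) (v : Fin n) :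
    v ∈ upList E hup (bot E hup v) := by
  rw [bot]
  split
  · next h =>
    have IH := mem_upList_bot hup hhd (Classical.choose h)
    exact mem_upList_next hup hhd IH (Classical.choose_spec h)
  · exact mem_upList_self hup v
termination_by (v : ℕ)
decreasing_by rename_i h; exact down_wf hup (Classical.choose_spec h)

lemma mem_upList_bot_iff_reach (hup : UpG E) (hld : LdOne E) (hhd : HdOne E) (v u : Fin n) :
    u ∈ upList E hup (bot E hup v) ↔ Reach E v u := by
  constructor
  · intro hu
    have h1 : Reach E (bot E hup v) u := reach_of_mem_upList hup hu
    have h2 : Reach E (bot E hup v) v := reach_of_mem_upList hup (mem_upList_bot hup hhd v)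
    have hsymm : Symmetric (fun x y : Fin n => (x, y) ∈ E ∨ (y, x) ∈ E) := by
      intro x y h; tauto
    exact Relation.ReflTransGen.trans ((@Relation.ReflTransGen.stdSymm _ _ ⟨fun a b h => hsymm h⟩).symm _ _ h2) h1
  · intro hr
    induction hr with
    | refl => exact mem_upList_bot hup hhd v
    | tail _ hstep ih =>
      rcases hstep with hxy | hyx
      · exact mem_upList_next hup hhd ih hxy
      · rcases mem_upList_prev hup hld ih hyx with rfl | hy
        · exact absurd ⟨_, hyx⟩ (bot_no_prev hup v)
        · exact hy

theorem incPathComp_of_degs (hup : UpG E) (hld : LdOne E) (hhd : HdOne E) (v : Fin n) :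
    IncPathComp E v := by
  classical
  set L := upList E hup (bot E hup v) with hL
  have hne : L ≠ [] := upList_ne_nil hup _
  have hlen : 0 < L.length := List.length_pos_iff.mpr hne
  refine ⟨L.length - 1, fun i => L.get ⟨i, by omega⟩, ?_, ?_, ?_⟩
  · rw [Fin.strictMono_iff_lt_succ]
    intro i
    have hch : List.Chain' (· < ·) L := by
      refine List.IsChain.imp ?_ (upList_chain hup _)
      intro a b hab; exact hup _ hab
    have hi : (i : ℕ) < L.length - 1 := by have := i.isLt; omega
    have := List.isChain_iff_getElem.mp hch i (by omega)
    simpa using this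
  · intro u
    rw [← mem_upList_bot_iff_reach hup hld hhd v u, List.mem_iff_get]
    have hLl : (upList E hup (bot E hup v)).length = L.length := rfl
    constructor
    · rintro ⟨j, rfl⟩
      exact ⟨⟨j, by have := j.isLt; omega⟩, rfl⟩
    · rintro ⟨i, rfl⟩
      exact ⟨⟨i, by have := i.isLt; omega⟩, rfl⟩
  · intro i
    have hch := upList_chain hup (bot E hup v)
    rw [← hL] at hch
    replace hch := List.isChain_iff_getElem.mp hch
    have hi : (i : ℕ) < L.length - 1 := by have := i.isLt; omega
    have := hch i (by omega)
    simpa using this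

end Core
section Count
variable {n : ℕ}

lemma ldeg_add (A B : Multiset (Fin n × Fin n)) (v : Fin n) :
    ldeg (A + B) v = ldeg A v + ldeg B v := by
  simp [ldeg, Multiset.filter_add]

lemma hdeg_add (A B : Multiset (Fin n × Fin n)) (v : Fin n) :
    hdeg (A + B) v = hdeg A v + hdeg B v := by
  simp [hdeg, Multiset.filter_add]

lemma ldeg_sum {k : ℕ} (f : Fin k → Multiset (Fin n × Fin n)) (v : Fin n) :
    ldeg (∑ i, f i) v = ∑ i, ldeg (f i) v := by
  classical
  induction (Finset.univ : Finset (Fin k)) using Finset.induction with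
  | empty => simp [ldeg]
  | insert _ _ hx ih => rename_i a s; simp [Finset.sum_insert hx, ldeg_add, ih]

lemma hdeg_sum {k : ℕ} (f : Fin k → Multiset (Fin n × Fin n)) (v : Fin n) :
    hdeg (∑ i, f i) v = ∑ i, hdeg (f i) v := by
  classical
  induction (Finset.univ : Finset (Fin k)) using Finset.induction with
  | empty => simp [hdeg]
  | insert _ _ hx ih => rename_i a s; simp [Finset.sum_insert hx, hdeg_add, ih]

lemma card_filter_range (m : ℕ) (p : ℕ → Prop) [DecidablePred p] :
    Multiset.card ((Multiset.range m).filter p) = ((Finset.range m).filter p).card := by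
  rw [← Finset.range_val]
  rfl

lemma ldeg_up_eq_down (C : AltCycle n) (v : Fin n) :
    ldeg C.upEdges v = ldeg C.downEdges v := by
  simp only [ldeg, AltCycle.upEdges, AltCycle.downEdges, Multiset.filter_map,
    Multiset.card_map, Function.comp]

lemma mod_helper1 {m : ℕ} (hm : 0 < m) {a : ℕ} (ha : a < m) :
    ((a + (m - 1)) % m + 1) % m = a := by
  rw [Nat.mod_add_mod]
  have h : a + (m - 1) + 1 = a + m := by omega
  rw [h, Nat.add_mod_right, Nat.mod_eq_of_lt ha]

lemma mod_helper2 {m : ℕ} (hm : 0 < m) {a : ℕ} (ha : a < m) :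
    ((a + 1) % m + (m - 1)) % m = a := by
  rw [Nat.mod_add_mod]
  have h : a + 1 + (m - 1) = a + m := by omega
  rw [h, Nat.add_mod_right, Nat.mod_eq_of_lt ha]

lemma w_succ_mod (C : AltCycle n) {j : ℕ} (hj : j < C.m) :
    C.w (2 * ((j + 1) % C.m)) = C.w (2 * j + 2) := by
  rcases eq_or_lt_of_le (Nat.succ_le_of_lt hj) with h | h
  · have h' : j + 1 = C.m := by omega
    have h1 : (j + 1) % C.m = 0 := by rw [h', Nat.mod_self]
    have h2 : 2 * j + 2 = 2 * C.m := by omega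
    rw [h1, h2, C.closed, Nat.mul_zero]
  · rw [Nat.mod_eq_of_lt h]
    have h3 : 2 * (j + 1) = 2 * j + 2 := by ring
    rw [h3]

lemma hdeg_up_eq_down (C : AltCycle n) (v : Fin n) :
    hdeg C.upEdges v = hdeg C.downEdges v := by
  classical
  have hup : hdeg C.upEdges v
      = ((Finset.range C.m).filter (fun j => C.w (2 * j) = v)).card := by
    simp only [hdeg, AltCycle.upEdges, Multiset.filter_map, Multiset.card_map, Function.comp]
    exact card_filter_range _ _
  have hdown : hdeg C.downEdges v
      = ((Finset.range C.m).filter (fun j => C.w (2 * j + 2) = v)).card := by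
    simp only [hdeg, AltCycle.downEdges, Multiset.filter_map, Multiset.card_map, Function.comp]
    exact card_filter_range _ _
  rw [hup, hdown]
  have hm : 0 < C.m := C.pos
  refine Finset.card_bij' (fun j _ => (j + (C.m - 1)) % C.m) (fun j _ => (j + 1) % C.m)
    ?_ ?_ ?_ ?_
  · intro a ha
    simp only [Finset.mem_filter, Finset.mem_range] at ha ⊢
    obtain ⟨halt, hav⟩ := ha
    refine ⟨Nat.mod_lt _ hm, ?_⟩
    have hb : (a + (C.m - 1)) % C.m < C.m := Nat.mod_lt _ hm
    have := w_succ_mod C hb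
    rw [← this, mod_helper1 hm halt]
    exact hav
  · intro a ha
    simp only [Finset.mem_filter, Finset.mem_range] at ha ⊢
    obtain ⟨halt, hav⟩ := ha
    refine ⟨Nat.mod_lt _ hm, ?_⟩
    rw [w_succ_mod C halt]
    exact hav
  · intro a ha
    simp only [Finset.mem_filter, Finset.mem_range] at ha
    exact mod_helper1 hm ha.1
  · intro a ha
    simp only [Finset.mem_filter, Finset.mem_range] at ha
    exact mod_helper2 hm ha.1

end Count
/-- If a vertical multigraph with all `ldeg, hdeg ∈ {0,2}` is
partitioned into alternating cycles, every connected component of the up-edge half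
`G₁` and of the down-edge half `G₂` is a single vertex or a path along vertices of
strictly increasing height. -/
theorem halves_components_increasing_paths {n : ℕ} (E : Multiset (Fin n × Fin n))
    (k : ℕ) (Cs : Fin k → AltCycle n) (hpart : E = ∑ i, (Cs i).edges)
    (hl : ∀ v : Fin n, ldeg E v = 0 ∨ ldeg E v = 2)
    (hh : ∀ v : Fin n, hdeg E v = 0 ∨ hdeg E v = 2) :
    ∀ v : Fin n,
      IncPathComp (∑ i, (Cs i).upEdges) v ∧ IncPathComp (∑ i, (Cs i).downEdges) v := by
  classical
  intro v
  set G1 := ∑ i, (Cs i).upEdges with hG1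
  set G2 := ∑ i, (Cs i).downEdges with hG2
  have hE : E = G1 + G2 := by
    rw [hpart, hG1, hG2, ← Finset.sum_add_distrib]
    rfl
  have hUp1 : UpG G1 := by
    intro e he
    rw [hG1] at he
    obtain ⟨i, -, hei⟩ := Multiset.mem_sum.mp he
    obtain ⟨j, hj, rfl⟩ := Multiset.mem_map.mp hei
    exact (Cs i).up j (Multiset.mem_range.mp hj)
  have hUp2 : UpG G2 := by
    intro e he
    rw [hG2] at he
    obtain ⟨i, -, hei⟩ := Multiset.mem_sum.mp he
    obtain ⟨j, hj, rfl⟩ := Multiset.mem_map.mp hei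
    exact (Cs i).down j (Multiset.mem_range.mp hj)
  have hld12 : ∀ u, ldeg G1 u = ldeg G2 u := by
    intro u
    rw [hG1, hG2, ldeg_sum, ldeg_sum]
    exact Finset.sum_congr rfl fun i _ => ldeg_up_eq_down (Cs i) u
  have hhd12 : ∀ u, hdeg G1 u = hdeg G2 u := by
    intro u
    rw [hG1, hG2, hdeg_sum, hdeg_sum]
    exact Finset.sum_congr rfl fun i _ => hdeg_up_eq_down (Cs i) u
  have hld1 : ∀ u, ldeg G1 u ≤ 1 := by
    intro u
    have h2 : ldeg E u = ldeg G1 u + ldeg G2 u := by rw [hE, ldeg_add]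
    have h3 := hl u
    have h4 := hld12 u
    omega
  have hhd1 : ∀ u, hdeg G1 u ≤ 1 := by
    intro u
    have h2 : hdeg E u = hdeg G1 u + hdeg G2 u := by rw [hE, hdeg_add]
    have h3 := hh u
    have h4 := hhd12 u
    omega
  have hLd1 : LdOne G1 := fun u => hld1 u
  have hHd1 : HdOne G1 := fun u => hhd1 u
  have hLd2 : LdOne G2 := by
    intro u
    have := hld1 u
    rw [hld12 u] at this
    simpa [ldeg] using this
  have hHd2 : HdOne G2 := by
    intro u
    have := hhd1 u
    rw [hhd12 u] at this
    simpa [hdeg] using this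
  exact ⟨incPathComp_of_degs hUp1 hLd1 hHd1 v, incPathComp_of_degs hUp2 hLd2 hHd2 v⟩
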